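/- Let n ≥ 0 and let s ≥ 0 with s ≡ n (mod 2). Then the number of walks of length n constrained to the first octant (all positions (x,y) satisfy x ≥ y ≥ 0) whose endpoint (x,y) satisfies y ≤ x − s equals the number of walks of length n constrained to the upper half-plane (all positions satisfy y ≥ 0) that end at the point (s, 0). -/

import Mathlib

/-- A walk of length `n` with unit steps N, S, E, W. -/
def IsWalk {n : ℕ} (w : Fin n → ℤ × ℤ) : Prop :=
  ∀ l, w l = (0, 1) ∨ w l = (0, -1) ∨ w l = (1, 0) ∨ w l = (-1, 0)

/-- Position of the walk `w` after `a` steps. -/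
def pos {n : ℕ} (w : Fin n → ℤ × ℤ) (a : ℕ) : ℤ × ℤ :=
  ∑ l ∈ Finset.univ.filter (fun l : Fin n => (l : ℕ) < a), w l


/-- extended binomial: number of ±1-walks of length n ending at k -/
def Bk (n : ℕ) (k : ℤ) : ℤ :=
  if 0 ≤ (n : ℤ) + k ∧ ((n : ℤ) + k) % 2 = 0 then
    (n.choose (((n : ℤ) + k) / 2).toNat : ℤ) else 0

lemma Bk_zero (k : ℤ) : Bk 0 k = if k = 0 then 1 else 0 := by
  unfold Bk
  rcases eq_or_ne k 0 with h | h
  · subst h; norm_num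
  · rw [if_neg h]
    push_cast
    by_cases h2 : 0 ≤ (0:ℤ) + k ∧ ((0:ℤ) + k) % 2 = 0
    · rw [if_pos h2]
      have : 1 ≤ ((0:ℤ) + k) / 2 ∨ ((0:ℤ)+k)/2 = 0 := by omega
      have hk : 1 ≤ (((0:ℤ) + k) / 2).toNat := by omega
      rw [Nat.choose_eq_zero_of_lt (by omega)]
      norm_num
    · rw [if_neg h2]

lemma Bk_succ (n : ℕ) (k : ℤ) : Bk (n+1) k = Bk n (k-1) + Bk n (k+1) := by
  unfold Bk
  by_cases hpar : ((n:ℤ) + 1 + k) % 2 = 0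
  · by_cases hpos : 0 ≤ (n:ℤ) + 1 + k
    · push_cast
      rcases eq_or_lt_of_le hpos with h0 | h1
      · -- n+1+k = 0
        rw [if_pos ⟨hpos, hpar⟩, if_neg (by omega), if_pos (by constructor <;> omega)]
        have e1 : (((n:ℤ) + 1 + k) / 2).toNat = 0 := by omega
        have e2 : (((n:ℤ) + (k+1)) / 2).toNat = 0 := by omega
        rw [e1, e2]
        simp
      · -- n+1+k ≥ 2 (even)
        obtain ⟨m, hm⟩ : ∃ m : ℕ, (n:ℤ) + 1 + k = 2 * ((m:ℤ) + 1) := by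
          refine ⟨(((n:ℤ) + 1 + k)/2 - 1).toNat, by omega⟩
        rw [if_pos ⟨hpos, hpar⟩, if_pos (by constructor <;> omega),
          if_pos (by constructor <;> omega)]
        have e1 : (((n:ℤ) + 1 + k) / 2).toNat = m + 1 := by omega
        have e2 : (((n:ℤ) + (k-1)) / 2).toNat = m := by omega
        have e3 : (((n:ℤ) + (k+1)) / 2).toNat = m + 1 := by omega
        rw [e1, e2, e3, Nat.choose_succ_succ]
        push_cast; ring
    · rw [if_neg (by intro h; exact hpos h.1), if_neg (by push_cast; intro h; omega),
        if_neg (by push_cast; intro h; omega)]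
      simp
  · rw [if_neg (by intro h; exact hpar h.2), if_neg (by push_cast; intro h; omega),
      if_neg (by push_cast; intro h; omega)]
    simp

lemma Bk_eq_zero_of_gt {n : ℕ} {k : ℤ} (h : (n:ℤ) < k) : Bk n k = 0 := by
  unfold Bk
  by_cases h2 : 0 ≤ (n:ℤ) + k ∧ ((n:ℤ) + k) % 2 = 0
  · rw [if_pos h2, Nat.choose_eq_zero_of_lt (by omega)]; simp
  · rw [if_neg h2]

lemma Bk_eq_zero_of_odd {n : ℕ} {k : ℤ} (h : ((n:ℤ) + k) % 2 = 1) : Bk n k = 0 := by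
  unfold Bk
  rw [if_neg (by intro h2; omega)]

lemma Bk_symm (n : ℕ) (k : ℤ) : Bk n (-k) = Bk n k := by
  unfold Bk
  by_cases hpar : ((n:ℤ) + k) % 2 = 0
  · by_cases h1 : 0 ≤ (n:ℤ) + k
    · by_cases h2 : 0 ≤ (n:ℤ) - k
      · rw [if_pos (by constructor <;> omega), if_pos ⟨h1, hpar⟩]
        obtain ⟨m, hm⟩ : ∃ m : ℕ, (n:ℤ) + k = 2 * (m:ℤ) := ⟨(((n:ℤ)+k)/2).toNat, by omega⟩
        have hmn : m ≤ n := by omega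
        have e1 : (((n:ℤ) + k) / 2).toNat = m := by omega
        have e2 : (((n:ℤ) + -k) / 2).toNat = n - m := by omega
        rw [e1, e2, Nat.choose_symm (by omega)]
      · -- k > n : RHS has choose n m with m > n = 0; LHS if-cond fails
        rw [if_neg (by intro hc; omega), if_pos ⟨h1, hpar⟩,
          Nat.choose_eq_zero_of_lt (by omega)]
        simp
    · by_cases h2 : 0 ≤ (n:ℤ) - k
      · rw [if_pos (by constructor <;> omega), if_neg (by intro hc; exact h1 hc.1),
          Nat.choose_eq_zero_of_lt (by omega)]
        simp
      · omega
  · rw [if_neg (by intro hc; omega), if_neg (by intro hc; exact hpar hc.2)]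

def Stp : Finset (ℤ × ℤ) := {(0,1), (0,-1), (1,0), (-1,0)}

lemma pos_eq_sum_ite {n : ℕ} (w : Fin n → ℤ × ℤ) (a : ℕ) :
    pos w a = ∑ l : Fin n, if (l : ℕ) < a then w l else 0 := by
  rw [pos, Finset.sum_filter]

lemma pos_zero {n : ℕ} (w : Fin n → ℤ × ℤ) : pos w 0 = 0 := by
  simp [pos_eq_sum_ite]

lemma pos_ge {n a : ℕ} (w : Fin n → ℤ × ℤ) (h : n ≤ a) : pos w a = pos w n := by
  rw [pos_eq_sum_ite, pos_eq_sum_ite]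
  refine Finset.sum_congr rfl fun l _ => ?_
  have := l.isLt
  rw [if_pos (by omega), if_pos (by omega)]

lemma pos_snoc {n : ℕ} (w : Fin n → ℤ × ℤ) (st : ℤ × ℤ) (a : ℕ) :
    pos (Fin.snoc w st) a = pos w a + if n < a then st else 0 := by
  rw [pos_eq_sum_ite, pos_eq_sum_ite, Fin.sum_univ_castSucc]
  simp [Fin.snoc_castSucc, Fin.snoc_last]

noncomputable def cnt (D : ℤ × ℤ → Prop) (n : ℕ) (p : ℤ × ℤ) : ℕ :=
  Nat.card {w : Fin n → ↥Stp //
    (∀ a ≤ n, D (pos (fun l => ((w l : ℤ × ℤ))) a)) ∧ pos (fun l => ((w l : ℤ × ℤ))) n = p}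

lemma cnt_out {D : ℤ × ℤ → Prop} {n : ℕ} {p : ℤ × ℤ} (h : ¬ D p) : cnt D n p = 0 := by
  rw [cnt, Nat.card_eq_zero]
  left
  constructor
  intro w
  exact h (w.2.2 ▸ w.2.1 n le_rfl)

lemma cnt_zero {D : ℤ × ℤ → Prop} {p : ℤ × ℤ} (hD : D 0) :
    cnt D 0 p = if p = 0 then 1 else 0 := by
  rw [cnt]
  rcases eq_or_ne p 0 with h | h
  · subst h
    rw [if_pos rfl, Nat.card_eq_one_iff_unique]
    constructor
    · constructor
      intro a b
      apply Subtype.ext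
      funext l
      exact l.elim0
    · refine ⟨⟨finZeroElim, fun a ha => ?_, pos_zero _⟩⟩
      have : a = 0 := by omega
      subst this
      rw [pos_zero]
      exact hD
  · rw [if_neg h, Nat.card_eq_zero]
    left
    constructor
    intro w
    exact h (w.2.2.symm.trans (pos_zero _))

lemma natCard_sigma {ι : Type*} [Fintype ι] (f : ι → Type*) [∀ i, Finite (f i)] :
    Nat.card (Σ i, f i) = ∑ i, Nat.card (f i) := by
  classical
  letI : ∀ i, Fintype (f i) := fun i => Fintype.ofFinite _
  simp [Nat.card_eq_fintype_card]

lemma snoc_cond {D : ℤ × ℤ → Prop} {n : ℕ} {p : ℤ × ℤ} (hD : D p)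
    (v : Fin n → ↥Stp) (st : ↥Stp) :
    ((∀ a ≤ n + 1, D (pos (fun l => (((Fin.snoc v st : Fin (n+1) → ↥Stp) l : ↥Stp) : ℤ × ℤ)) a)) ∧
      pos (fun l => (((Fin.snoc v st : Fin (n+1) → ↥Stp) l : ↥Stp) : ℤ × ℤ)) (n+1) = p)
    ↔ ((∀ a ≤ n, D (pos (fun l => ((v l : ℤ × ℤ))) a)) ∧
        pos (fun l => ((v l : ℤ × ℤ))) n = p - (st : ℤ × ℤ)) := by
  have hc : (fun l => (((Fin.snoc v st : Fin (n+1) → ↥Stp) l : ↥Stp) : ℤ × ℤ)) =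
      Fin.snoc (fun l => ((v l : ℤ × ℤ))) (st : ℤ × ℤ) := by
    funext l
    refine Fin.lastCases ?_ (fun i => ?_) l
    · simp
    · simp
  rw [hc]
  constructor
  · rintro ⟨h1, h2⟩
    rw [pos_snoc, if_pos (by omega), pos_ge _ (by omega)] at h2
    refine ⟨fun a ha => ?_, eq_sub_of_add_eq h2⟩
    have := h1 a (by omega)
    rwa [pos_snoc, if_neg (by omega), add_zero] at this
  · rintro ⟨h1, h2⟩
    constructor
    · intro a ha
      rw [pos_snoc]
      rcases Nat.lt_or_ge n a with hna | hna
      · have : a = n + 1 := by omega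
        subst this
        rw [if_pos (by omega), pos_ge _ (by omega), h2]
        simpa using hD
      · rw [if_neg (by omega), add_zero]
        exact h1 a hna
    · rw [pos_snoc, if_pos (by omega), pos_ge _ (by omega), h2]
      simp

lemma cnt_succ {D : ℤ × ℤ → Prop} {n : ℕ} {p : ℤ × ℤ} (hD : D p) :
    cnt D (n+1) p = ∑ q ∈ Stp, cnt D n (p - q) := by
  classical
  have key : cnt D (n+1) p = ∑ st : ↥Stp, cnt D n (p - st) := by
    rw [cnt,
      Nat.card_congr ((Equiv.sigmaFiberEquiv (fun w : {w : Fin (n+1) → ↥Stp //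
        (∀ a ≤ n+1, D (pos (fun l => ((w l : ℤ × ℤ))) a)) ∧
          pos (fun l => ((w l : ℤ × ℤ))) (n+1) = p} => w.1 (Fin.last n))).symm),
      natCard_sigma]
    refine Finset.sum_congr rfl fun st _ => ?_
    refine Nat.card_congr ?_
    refine ⟨fun w => ⟨Fin.init w.1.1, ?_⟩, fun v => ⟨⟨Fin.snoc v.1 st, ?_⟩, by simp⟩,
      fun w => ?_, fun v => ?_⟩
    · have hw := w.1.2
      rw [← Fin.snoc_init_self w.1.1, w.2] at hw
      exact (snoc_cond hD (Fin.init w.1.1) st).mp hw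
    · exact (snoc_cond hD v.1 st).mpr v.2
    · apply Subtype.ext
      apply Subtype.ext
      show Fin.snoc (Fin.init w.1.1) st = w.1.1
      funext l
      refine Fin.lastCases ?_ (fun i => ?_) l
      · rw [Fin.snoc_last]
        exact w.2.symm
      · rw [Fin.snoc_castSucc]
        rfl
    · apply Subtype.ext
      funext i
      show (Fin.snoc (v.1) st : Fin (n+1) → ↥Stp) i.castSucc = v.1 i
      rw [Fin.snoc_castSucc]
  rw [key, Finset.univ_eq_attach]
  exact Finset.sum_attach Stp (fun q => cnt D n (p - q))

def Dhp : ℤ × ℤ → Prop := fun q => 0 ≤ q.2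
def Doct : ℤ × ℤ → Prop := fun q => q.2 ≤ q.1 ∧ 0 ≤ q.2

def FHuv (n : ℕ) (u v : ℤ) : ℤ := Bk n u * Bk n v - Bk n (u+2) * Bk n (v-2)
def FOuv (n : ℕ) (u v : ℤ) : ℤ :=
  (Bk n u - Bk n (u+6)) * (Bk n v - Bk n (v+2))
    - (Bk n (u+2) - Bk n (u+4)) * (Bk n (v-2) - Bk n (v+4))

lemma Stp_sum {M : Type*} [AddCommMonoid M] (f : ℤ × ℤ → M) :
    ∑ q ∈ Stp, f q = f (0,1) + (f (0,-1) + (f (1,0) + f (-1,0))) := by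
  rw [Stp, Finset.sum_insert (by decide), Finset.sum_insert (by decide),
    Finset.sum_insert (by decide), Finset.sum_singleton]

lemma FH_eq (n : ℕ) : ∀ x y : ℤ, 0 ≤ y → (cnt Dhp n (x,y) : ℤ) = FHuv n (x+y) (x-y) := by
  induction n with
  | zero =>
    intro x y hy
    rw [cnt_zero (show Dhp 0 from le_refl 0)]
    simp only [FHuv, Bk_zero, Prod.ext_iff, Prod.fst_zero, Prod.snd_zero]
    split_ifs <;> norm_num <;> omega
  | succ n ih =>
    intro x y hy
    have hD : Dhp (x,y) := hy
    rw [cnt_succ hD, Stp_sum (fun q => cnt Dhp n ((x,y) - q))]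
    have e1 : (x,y) - ((0:ℤ),(1:ℤ)) = (x, y-1) := by rw [Prod.mk_sub_mk]; norm_num
    have e2 : (x,y) - ((0:ℤ),(-1:ℤ)) = (x, y+1) := by rw [Prod.mk_sub_mk]; norm_num
    have e3 : (x,y) - ((1:ℤ),(0:ℤ)) = (x-1, y) := by rw [Prod.mk_sub_mk]; norm_num
    have e4 : (x,y) - ((-1:ℤ),(0:ℤ)) = (x+1, y) := by rw [Prod.mk_sub_mk]; norm_num
    rw [e1, e2, e3, e4]
    push_cast
    have T1 : (cnt Dhp n (x, y-1) : ℤ) = FHuv n (x+y-1) (x-y+1) := by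
      rcases eq_or_lt_of_le hy with h0 | h1
      · rw [cnt_out (show ¬ Dhp (x, y-1) from by simp only [Dhp]; omega)]
        rw [← h0]
        simp only [FHuv]
        push_cast
        ring_nf
      · rw [ih x (y-1) (by omega)]
        ring_nf
    have T2 : (cnt Dhp n (x, y+1) : ℤ) = FHuv n (x+y+1) (x-y-1) := by
      rw [ih x (y+1) (by omega)]
      ring_nf
    have T3 : (cnt Dhp n (x-1, y) : ℤ) = FHuv n (x+y-1) (x-y-1) := by
      rw [ih (x-1) y hy]
      ring_nf
    have T4 : (cnt Dhp n (x+1, y) : ℤ) = FHuv n (x+y+1) (x-y+1) := by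
      rw [ih (x+1) y hy]
      ring_nf
    rw [T1, T2, T3, T4]
    simp only [FHuv, Bk_succ]
    ring

lemma FO_eq (n : ℕ) : ∀ x y : ℤ, 0 ≤ y → y ≤ x →
    (cnt Doct n (x,y) : ℤ) = FOuv n (x+y) (x-y) := by
  induction n with
  | zero =>
    intro x y hy hyx
    rw [cnt_zero (show Doct 0 from ⟨le_refl 0, le_refl 0⟩)]
    simp only [FOuv, Bk_zero, Prod.ext_iff, Prod.fst_zero, Prod.snd_zero]
    split_ifs <;> norm_num <;> omega
  | succ n ih =>
    intro x y hy hyx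
    have hD : Doct (x,y) := ⟨hyx, hy⟩
    rw [cnt_succ hD, Stp_sum (fun q => cnt Doct n ((x,y) - q))]
    have e1 : (x,y) - ((0:ℤ),(1:ℤ)) = (x, y-1) := by rw [Prod.mk_sub_mk]; norm_num
    have e2 : (x,y) - ((0:ℤ),(-1:ℤ)) = (x, y+1) := by rw [Prod.mk_sub_mk]; norm_num
    have e3 : (x,y) - ((1:ℤ),(0:ℤ)) = (x-1, y) := by rw [Prod.mk_sub_mk]; norm_num
    have e4 : (x,y) - ((-1:ℤ),(0:ℤ)) = (x+1, y) := by rw [Prod.mk_sub_mk]; norm_num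
    rw [e1, e2, e3, e4]
    push_cast
    have T1 : (cnt Doct n (x, y-1) : ℤ) = FOuv n (x+y-1) (x-y+1) := by
      rcases eq_or_lt_of_le hy with h0 | h1
      · rw [cnt_out (show ¬ Doct (x, y-1) from by simp only [Doct, not_and]; intro; omega)]
        rw [← h0]
        simp only [FOuv]
        push_cast
        ring_nf
      · rw [ih x (y-1) (by omega) (by omega)]
        ring_nf
    have T2 : (cnt Doct n (x, y+1) : ℤ) = FOuv n (x+y+1) (x-y-1) := by
      rcases eq_or_lt_of_le hyx with h0 | h1
      · rw [cnt_out (show ¬ Doct (x, y+1) from by simp only [Doct, not_and]; intro; omega)]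
        rw [h0]
        simp only [FOuv]
        have s1 : Bk n (-1) = Bk n 1 := Bk_symm n 1
        have s3 : Bk n (-3) = Bk n 3 := Bk_symm n 3
        ring_nf
        ring_nf at s1 s3
        rw [s1, s3]
        ring
      · rw [ih x (y+1) (by omega) (by omega)]
        ring_nf
    have T3 : (cnt Doct n (x-1, y) : ℤ) = FOuv n (x+y-1) (x-y-1) := by
      rcases eq_or_lt_of_le hyx with h0 | h1
      · rw [cnt_out (show ¬ Doct (x-1, y) from by simp only [Doct, not_and]; intro; omega)]
        rw [h0]
        simp only [FOuv]
        have s1 : Bk n (-1) = Bk n 1 := Bk_symm n 1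
        have s3 : Bk n (-3) = Bk n 3 := Bk_symm n 3
        ring_nf
        ring_nf at s1 s3
        rw [s1, s3]
        ring
      · rw [ih (x-1) y (by omega) (by omega)]
        ring_nf
    have T4 : (cnt Doct n (x+1, y) : ℤ) = FOuv n (x+y+1) (x-y+1) := by
      rw [ih (x+1) y (by omega) (by omega)]
      ring_nf
    rw [T1, T2, T3, T4]
    simp only [FOuv, Bk_succ]
    ring

-- assembly part, appended to work.lean for testing
section ASM

lemma mem_Stp {q : ℤ × ℤ} : q ∈ Stp ↔ q = (0,1) ∨ q = (0,-1) ∨ q = (1,0) ∨ q = (-1,0) := by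
  simp [Stp]

lemma card_walks {n : ℕ} (C : (Fin n → ℤ × ℤ) → Prop) :
    Nat.card {w : Fin n → ℤ × ℤ // IsWalk w ∧ C w}
      = Nat.card {v : Fin n → ↥Stp // C (fun l => ((v l : ℤ × ℤ)))} := by
  apply Nat.card_congr
  refine ⟨fun w => ⟨fun l => ⟨w.1 l, mem_Stp.mpr (w.2.1 l)⟩, w.2.2⟩,
    fun v => ⟨fun l => ((v.1 l : ℤ × ℤ)), fun l => mem_Stp.mp (v.1 l).2, v.2⟩,
    fun w => Subtype.ext rfl, fun v => Subtype.ext (funext fun l => Subtype.ext rfl)⟩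

lemma pos_fst_le {n : ℕ} (w : Fin n → ↥Stp) : (pos (fun l => ((w l : ℤ × ℤ))) n).1 ≤ n := by
  rw [pos_eq_sum_ite]
  rw [show (∑ l : Fin n, if (l : ℕ) < n then ((w l : ℤ × ℤ)) else 0).1
      = ∑ l : Fin n, (if (l : ℕ) < n then ((w l : ℤ × ℤ)) else 0).1 from
    map_sum (AddMonoidHom.fst ℤ ℤ) _ _]
  calc ∑ l : Fin n, (if (l : ℕ) < n then ((w l : ℤ × ℤ)) else 0).1
      ≤ ∑ _l : Fin n, (1:ℤ) := by
        refine Finset.sum_le_sum fun l _ => ?_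
        split_ifs
        · rcases mem_Stp.mp (w l).2 with h | h | h | h <;> rw [h] <;> norm_num
        · norm_num
    _ = n := by simp

lemma tele3 (h : ℕ → ℤ) (K : ℕ) :
    ∑ i ∈ Finset.range K, (h i - h (i+3)) = h 0 + h 1 + h 2 - h K - h (K+1) - h (K+2) := by
  induction K with
  | zero => rw [Finset.sum_range_zero]; ring
  | succ K ih => rw [Finset.sum_range_succ, ih]; ring_nf

lemma tele2 (h : ℕ → ℤ) (K : ℕ) :
    ∑ i ∈ Finset.range K, (h i - h (i+2)) = h 0 + h 1 - h K - h (K+1) := by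
  induction K with
  | zero => rw [Finset.sum_range_zero]; ring
  | succ K ih => rw [Finset.sum_range_succ, ih]; ring_nf

lemma tele1 (h : ℕ → ℤ) (K : ℕ) :
    ∑ i ∈ Finset.range K, (h i - h (i+1)) = h 0 - h K := by
  induction K with
  | zero => rw [Finset.sum_range_zero]; ring
  | succ K ih => rw [Finset.sum_range_succ, ih]; ring_nf

lemma innerSumOct (n : ℕ) (s : ℤ) (hs : 0 ≤ s) (j : ℕ) :
    (∑ i ∈ Finset.range (n+1), (cnt Doct n ((i:ℤ) + s + (j:ℤ), (i:ℤ)) : ℤ))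
      = FHuv n (s+(j:ℤ)) (s+(j:ℤ)) - FHuv n (s+(j:ℤ)+2) (s+(j:ℤ)+2) := by
  have hterm : ∀ i : ℕ, (cnt Doct n ((i:ℤ) + s + (j:ℤ), (i:ℤ)) : ℤ)
      = (Bk n (s+(j:ℤ)+2*(i:ℤ)) - Bk n (s+(j:ℤ)+2*((i:ℤ)+3)))
          * (Bk n (s+(j:ℤ)) - Bk n (s+(j:ℤ)+2))
        - (Bk n (s+(j:ℤ)+2*((i:ℤ)+1)) - Bk n (s+(j:ℤ)+2*((i:ℤ)+2)))
          * (Bk n (s+(j:ℤ)-2) - Bk n (s+(j:ℤ)+4)) := by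
    intro i
    rw [FO_eq n ((i:ℤ) + s + (j:ℤ)) (i:ℤ) (by positivity) (by omega)]
    simp only [FOuv]
    ring_nf
  rw [Finset.sum_congr rfl (fun i _ => hterm i)]
  set h : ℕ → ℤ := fun i => Bk n (s + (j:ℤ) + 2*(i:ℤ)) with hh
  have hc1 : ∀ i : ℕ, Bk n (s+(j:ℤ)+2*((i:ℤ)+1)) = h (i + 1) := by
    intro i; simp only [hh]; push_cast; ring_nf
  have hc2 : ∀ i : ℕ, Bk n (s+(j:ℤ)+2*((i:ℤ)+2)) = h (i + 2) := by
    intro i; simp only [hh]; push_cast; ring_nf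
  have hc3 : ∀ i : ℕ, Bk n (s+(j:ℤ)+2*((i:ℤ)+3)) = h (i + 3) := by
    intro i; simp only [hh]; push_cast; ring_nf
  have hsum : ∀ i ∈ Finset.range (n+1),
      (Bk n (s+(j:ℤ)+2*(i:ℤ)) - Bk n (s+(j:ℤ)+2*((i:ℤ)+3)))
          * (Bk n (s+(j:ℤ)) - Bk n (s+(j:ℤ)+2))
        - (Bk n (s+(j:ℤ)+2*((i:ℤ)+1)) - Bk n (s+(j:ℤ)+2*((i:ℤ)+2)))
          * (Bk n (s+(j:ℤ)-2) - Bk n (s+(j:ℤ)+4))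
      = (h i - h (i+3)) * (Bk n (s+(j:ℤ)) - Bk n (s+(j:ℤ)+2))
        - ((fun i => h (i+1)) i - (fun i => h (i+1)) (i+1))
          * (Bk n (s+(j:ℤ)-2) - Bk n (s+(j:ℤ)+4)) := by
    intro i _
    have e0 : Bk n (s+(j:ℤ)+2*(i:ℤ)) = h i := by simp only [hh]
    rw [e0, hc3 i, hc1 i, hc2 i]
  rw [Finset.sum_congr rfl hsum, Finset.sum_sub_distrib, ← Finset.sum_mul, ← Finset.sum_mul,
    tele3 h (n+1), tele1 (fun i => h (i+1)) (n+1)]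
  have hz : ∀ c : ℕ, n < c → h c = 0 := by
    intro c hcn
    apply Bk_eq_zero_of_gt
    omega
  norm_num
  rw [hz (n+1) (by omega), hz (n+2) (by omega), hz (n+3) (by omega)]
  have e0 : h 0 = Bk n (s+(j:ℤ)) := by simp [hh]
  have e1 : h 1 = Bk n (s+(j:ℤ)+2) := by simp only [hh]; norm_num
  have e2 : h 2 = Bk n (s+(j:ℤ)+4) := by simp only [hh]; push_cast; ring_nf
  rw [e0, e1, e2]
  simp only [FHuv]
  ring_nf

end ASM

theorem stmt6 (n : ℕ) (s : ℤ) (hs : 0 ≤ s) (hpar : s % 2 = (n : ℤ) % 2) :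
    Nat.card {w : Fin n → ℤ × ℤ //
      IsWalk w ∧ (∀ a ≤ n, (pos w a).2 ≤ (pos w a).1 ∧ 0 ≤ (pos w a).2) ∧ (pos w n).2 ≤ (pos w n).1 - s} =
    Nat.card {w : Fin n → ℤ × ℤ //
      IsWalk w ∧ (∀ a ≤ n, 0 ≤ (pos w a).2) ∧ pos w n = (s, 0)} := by
  classical
  have hR : Nat.card {w : Fin n → ℤ × ℤ //
      IsWalk w ∧ (∀ a ≤ n, 0 ≤ (pos w a).2) ∧ pos w n = (s, 0)} = cnt Dhp n (s, 0) := by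
    rw [card_walks (C := fun w => (∀ a ≤ n, 0 ≤ (pos w a).2) ∧ pos w n = (s, 0))]
    rfl
  have hL : Nat.card {w : Fin n → ℤ × ℤ //
      IsWalk w ∧ (∀ a ≤ n, (pos w a).2 ≤ (pos w a).1 ∧ 0 ≤ (pos w a).2) ∧
        (pos w n).2 ≤ (pos w n).1 - s}
      = ∑ i ∈ Finset.range (n+1), ∑ j ∈ Finset.range (n+1),
          cnt Doct n ((i:ℤ)+s+(j:ℤ), (i:ℤ)) := by
    rw [card_walks (C := fun w => (∀ a ≤ n, (pos w a).2 ≤ (pos w a).1 ∧ 0 ≤ (pos w a).2) ∧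
      (pos w n).2 ≤ (pos w n).1 - s)]
    rw [Nat.card_eq_fintype_card, Fintype.card_subtype]
    rw [Finset.card_eq_sum_card_fiberwise
      (f := fun v : Fin n → ↥Stp =>
        (((pos (fun l => ((v l : ℤ × ℤ))) n).2).toNat,
          ((pos (fun l => ((v l : ℤ × ℤ))) n).1 - (pos (fun l => ((v l : ℤ × ℤ))) n).2 - s).toNat))
      (t := Finset.range (n+1) ×ˢ Finset.range (n+1))
      (fun v hv => by
        simp only [Finset.mem_coe, Finset.mem_filter, Finset.mem_univ, true_and] at hv
        obtain ⟨h1, h2⟩ := hv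
        have h3 := h1 n le_rfl
        have h4 := pos_fst_le v
        simp only [Finset.mem_coe, Finset.mem_product, Finset.mem_range]
        constructor <;> omega)]
    rw [Finset.sum_product]
    refine Finset.sum_congr rfl fun i _ => Finset.sum_congr rfl fun j _ => ?_
    rw [Finset.filter_filter, cnt, Nat.card_eq_fintype_card, Fintype.card_subtype]
    congr 1
    apply Finset.filter_congr
    intro v _
    constructor
    · rintro ⟨⟨h1, h2⟩, h3⟩
      have h4 := h1 n le_rfl
      rw [Prod.mk.injEq] at h3
      obtain ⟨h5, h6⟩ := h3
      refine ⟨h1, ?_⟩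
      refine Prod.ext ?_ ?_
      · show (pos (fun l => ((v l : ℤ × ℤ))) n).1 = (i:ℤ)+s+(j:ℤ)
        omega
      · show (pos (fun l => ((v l : ℤ × ℤ))) n).2 = (i:ℤ)
        omega
    · rintro ⟨h1, h2⟩
      have hx : (pos (fun l => ((v l : ℤ × ℤ))) n).1 = (i:ℤ)+s+(j:ℤ) := by rw [h2]
      have hy : (pos (fun l => ((v l : ℤ × ℤ))) n).2 = (i:ℤ) := by rw [h2]
      refine ⟨⟨h1, by omega⟩, ?_⟩
      rw [Prod.mk.injEq]
      constructor <;> omega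
  rw [hL, hR]
  set G : ℕ → ℤ := fun k => FHuv n (s+(k:ℤ)) (s+(k:ℤ)) with hG
  have hshift : ∀ j : ℕ, FHuv n (s+(j:ℤ)+2) (s+(j:ℤ)+2) = G (j+2) := by
    intro j
    simp only [hG]
    push_cast
    ring_nf
  have hcastL : ((∑ i ∈ Finset.range (n+1), ∑ j ∈ Finset.range (n+1),
      cnt Doct n ((i:ℤ)+s+(j:ℤ), (i:ℤ)) : ℕ) : ℤ) = FHuv n s s := by
    push_cast
    rw [Finset.sum_comm]
    have hj : ∀ j ∈ Finset.range (n+1),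
        (∑ i ∈ Finset.range (n+1), (cnt Doct n ((i:ℤ)+s+(j:ℤ), (i:ℤ)) : ℤ))
          = G j - G (j+2) := by
      intro j _
      rw [innerSumOct n s hs j, hshift j]
    rw [Finset.sum_congr rfl hj, tele2 G (n+1)]
    have hG1 : G 1 = 0 := by
      simp only [hG, Nat.cast_one, FHuv]
      rw [Bk_eq_zero_of_odd (show ((n:ℤ)+(s+1)) % 2 = 1 by omega),
        Bk_eq_zero_of_odd (show ((n:ℤ)+(s+1+2)) % 2 = 1 by omega),
        Bk_eq_zero_of_odd (show ((n:ℤ)+(s+1-2)) % 2 = 1 by omega)]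
      ring
    have hGn1 : G (n+1) = 0 := by
      simp only [hG, FHuv]
      rw [Bk_eq_zero_of_gt (by push_cast; omega), Bk_eq_zero_of_gt (by push_cast; omega)]
      ring
    have hGn2 : G (n+2) = 0 := by
      simp only [hG, FHuv]
      rw [Bk_eq_zero_of_gt (by push_cast; omega), Bk_eq_zero_of_gt (by push_cast; omega)]
      ring
    rw [hG1, hGn1, hGn2]
    simp only [hG, Nat.cast_zero, add_zero, sub_zero]
  have hcastR : ((cnt Dhp n (s, 0) : ℕ) : ℤ) = FHuv n s s := by
    rw [FH_eq n s 0 le_rfl]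
    ring_nf
  have := hcastL.trans hcastR.symm
  exact_mod_cast this
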